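/- arXiv:1612.01242 — 2 statements merged into one kernel-verified Lean document; each statement's English description precedes it below -/
import Mathlib

section
/- Let G be a finitely generated torsion-free 2-step nilpotent group generated by a₁,...,aₙ (n ≥ 2), where each aᵢ is centralizer-small and [aᵢ,aⱼ] ≠ 1 for all i ≠ j. If R is a commutative ring with identity acting faithfully by endomorphisms on G/Z(G) and on G' such that the commutator map G/Z(G) × G/Z(G) → G' is R-bilinear, then R is isomorphic to the ring of integers ℤ. -/
/-- The commutator `[x,y] = x⁻¹y⁻¹xy`. -/
def grpComm {G : Type*} [Group G] (x y : G) : G := x⁻¹ * y⁻¹ * x * y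

open scoped commutatorElement in
lemma grpComm_mem_commutator {G : Type*} [Group G] (g h : G) :
    grpComm g h ∈ commutator G := by
  have : grpComm g h = ⁅g⁻¹, h⁻¹⁆ := by
    simp [grpComm, commutatorElement_def]
  rw [this, commutator_def]
  exact Subgroup.commutator_mem_commutator (Subgroup.mem_top _) (Subgroup.mem_top _)

/-- `g` is centralizer-small: `C_G(g) = {gᵗz : t ∈ ℤ, z ∈ Z(G)}`. -/
def CSmall {G : Type*} [Group G] (g : G) : Prop :=
  ∀ x : G, x * g = g * x ↔ ∃ (t : ℤ) (z : G), z ∈ Subgroup.center G ∧ x = g ^ t * z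

/-- `(R, σ, τ)` is a ring of scalars of `G`: the commutative unital ring `R`
acts faithfully by endomorphisms (via `σ` on `G/Z(G)` and via `τ` on `G' `),
and the commutator pairing `G/Z(G) × G/Z(G) → G'` is `R`-bilinear. -/
def IsRingOfScalars (G : Type*) [Group G] (R : Type*) [CommRing R]
    (σ : R → G ⧸ Subgroup.center G → G ⧸ Subgroup.center G)
    (τ : R → commutator G → commutator G) : Prop :=
  (∀ r x y, σ r (x * y) = σ r x * σ r y) ∧
  (∀ r s x, σ (r + s) x = σ r x * σ s x) ∧
  (∀ r s x, σ (r * s) x = σ r (σ s x)) ∧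
  (∀ x, σ 1 x = x) ∧
  (∀ r s, (∀ x, σ r x = σ s x) → r = s) ∧
  (∀ r x y, τ r (x * y) = τ r x * τ r y) ∧
  (∀ r s x, τ (r + s) x = τ r x * τ s x) ∧
  (∀ r s x, τ (r * s) x = τ r (τ s x)) ∧
  (∀ x, τ 1 x = x) ∧
  (∀ r s, (∀ x, τ r x = τ s x) → r = s) ∧
  (∀ (r : R) (g g' h : G),
    σ r (g : G ⧸ Subgroup.center G) = (g' : G ⧸ Subgroup.center G) →
    τ r ⟨grpComm g h, grpComm_mem_commutator g h⟩ =
      ⟨grpComm g' h, grpComm_mem_commutator g' h⟩) ∧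
  (∀ (r : R) (g h h' : G),
    σ r (h : G ⧸ Subgroup.center G) = (h' : G ⧸ Subgroup.center G) →
    τ r ⟨grpComm g h, grpComm_mem_commutator g h⟩ =
      ⟨grpComm g h', grpComm_mem_commutator g h'⟩)

lemma grpComm_eq_one_iff {G : Type*} [Group G] (x y : G) :
    grpComm x y = 1 ↔ x * y = y * x := by
  have h : grpComm x y = (y * x)⁻¹ * (x * y) := by
    simp [grpComm, mul_assoc]
  rw [h, inv_mul_eq_one, eq_comm]

lemma grpComm_swap {G : Type*} [Group G] (x y : G) :
    grpComm x y = (grpComm y x)⁻¹ := by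
  simp [grpComm, mul_assoc]

lemma grpComm_zpow_left {G : Type*} [Group G] {a b : G}
    (hc : grpComm a b ∈ Subgroup.center G) (t : ℤ) :
    grpComm (a ^ t) b = (grpComm a b) ^ t := by
  set c := grpComm a b with hcdef
  have hab : b⁻¹ * a * b = a * c := by
    simp [hcdef, grpComm, mul_assoc]
  have hconj : b⁻¹ * a ^ t * b = (b⁻¹ * a * b) ^ t := by
    have := map_zpow (MulAut.conj b⁻¹) a t
    simpa [MulAut.conj_apply, mul_assoc] using this
  have hcom : Commute a c := (Subgroup.mem_center_iff.mp hc a)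
  have hkey : b⁻¹ * a ^ t * b = a ^ t * c ^ t := by
    rw [hconj, hab, hcom.mul_zpow]
  have : grpComm (a ^ t) b = (a ^ t)⁻¹ * (a ^ t * c ^ t) := by
    rw [← hkey]; simp [grpComm, mul_assoc]
  simpa [mul_assoc] using this

lemma grpComm_zpow_right {G : Type*} [Group G] {a b : G}
    (hc : grpComm b a ∈ Subgroup.center G) (t : ℤ) :
    grpComm a (b ^ t) = (grpComm a b) ^ t := by
  rw [grpComm_swap, grpComm_zpow_left hc, grpComm_swap b a]
  rw [← inv_zpow, inv_inv]

lemma zpow_inj_of_ne_one {G : Type*} [Group G] (htf : ∀ g : G, g ≠ 1 → ¬IsOfFinOrder g)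
    {c : G} (hc : c ≠ 1) {s t : ℤ} (h : c ^ s = c ^ t) : s = t := by
  by_contra hst
  apply htf c hc
  rw [isOfFinOrder_iff_zpow_eq_one]
  exact ⟨s - t, sub_ne_zero.mpr hst, by rw [zpow_sub, h, mul_inv_cancel]⟩

/-- If a f.g. torsion-free 2-step nilpotent group `G` is generated by `n ≥ 2`
pairwise non-commuting centralizer-small elements, then every ring of scalars
of `G` is isomorphic to `ℤ`. -/
theorem stmt_8 (G : Type*) [Group G] [Group.FG G]
    (htf : ∀ g : G, g ≠ 1 → ¬IsOfFinOrder g)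
    (h2 : ∀ x y z : G, grpComm x (grpComm y z) = 1)
    (n : ℕ) (hn : 2 ≤ n) (a : Fin n → G)
    (hgen : Subgroup.closure (Set.range a) = ⊤)
    (hsmall : ∀ i, CSmall (a i))
    (hne : ∀ i j, i ≠ j → grpComm (a i) (a j) ≠ 1)
    (R : Type*) [CommRing R]
    (σ : R → G ⧸ Subgroup.center G → G ⧸ Subgroup.center G)
    (τ : R → commutator G → commutator G)
    (hR : IsRingOfScalars G R σ τ) :
    Nonempty (R ≃+* ℤ) := by
  obtain ⟨σmul, σadd, σsmul, σone, σfaith, τmul, τadd, τsmul, τone, τfaith,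
    bilinL, bilinR⟩ := hR
  -- commutators are central
  have hcent : ∀ y z : G, grpComm y z ∈ Subgroup.center G := by
    intro y z
    rw [Subgroup.mem_center_iff]
    intro x
    exact (grpComm_eq_one_iff x (grpComm y z)).mp (h2 x y z)
  have σone' : ∀ r, σ r 1 = 1 := by
    intro r
    have h := σmul r 1 1
    rw [mul_one] at h
    exact (left_eq_mul.mp h)
  have τone' : ∀ r, τ r 1 = 1 := by
    intro r
    have h := τmul r 1 1
    rw [mul_one] at h
    exact (left_eq_mul.mp h)
  let F : R → (G ⧸ Subgroup.center G →* G ⧸ Subgroup.center G) := fun r =>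
    { toFun := σ r, map_one' := σone' r, map_mul' := σmul r }
  let i0 : Fin n := ⟨0, by omega⟩
  let i1 : Fin n := ⟨1, by omega⟩
  have hne01 : i0 ≠ i1 := by simp [i0, i1, Fin.ext_iff]
  -- Step A: on each generator, σ r acts as some integer power
  have stepA : ∀ (r : R) (i : Fin n), ∃ t : ℤ,
      σ r ((a i : G ⧸ Subgroup.center G)) = ((a i : G ⧸ Subgroup.center G)) ^ t := by
    intro r i
    obtain ⟨g, hg⟩ := QuotientGroup.mk_surjective (σ r (a i))
    have hb := bilinL r (a i) g (a i) hg.symm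
    have hself : grpComm (a i) (a i) = 1 := by simp [grpComm, mul_assoc]
    have h1 : (⟨grpComm (a i) (a i), grpComm_mem_commutator _ _⟩ : commutator G) = 1 :=
      Subtype.ext hself
    rw [h1, τone' r] at hb
    have hcm : grpComm g (a i) = 1 := (Subtype.ext_iff.mp hb.symm)
    have hcomm : g * a i = a i * g := (grpComm_eq_one_iff g (a i)).mp hcm
    obtain ⟨t, z, hz, hgz⟩ := (hsmall i g).mp hcomm
    refine ⟨t, ?_⟩
    rw [← hg, hgz, QuotientGroup.mk_mul, (QuotientGroup.eq_one_iff z).mpr hz, mul_one,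
      QuotientGroup.mk_zpow]
  -- uniqueness of the exponent
  have hpowinj : ∀ (i j : Fin n), i ≠ j → ∀ (s u : ℤ),
      ((a i : G ⧸ Subgroup.center G)) ^ s = ((a i : G ⧸ Subgroup.center G)) ^ u → s = u := by
    intro i j hij s u h
    rw [← QuotientGroup.mk_zpow, ← QuotientGroup.mk_zpow] at h
    have hmem : (a i ^ s)⁻¹ * a i ^ u ∈ Subgroup.center G := (QuotientGroup.eq).mp h
    have hmem' : a i ^ (u - s) ∈ Subgroup.center G := by
      have : (a i ^ s)⁻¹ * a i ^ u = a i ^ (u - s) := by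
        rw [← zpow_neg, ← zpow_add]; ring_nf
      rwa [this] at hmem
    have hcm : grpComm (a i ^ (u - s)) (a j) = 1 := by
      rw [grpComm_eq_one_iff]
      exact (Subgroup.mem_center_iff.mp hmem' (a j)).symm
    rw [grpComm_zpow_left (hcent _ _)] at hcm
    have h0 : (grpComm (a i) (a j)) ^ (u - s) = (grpComm (a i) (a j)) ^ (0 : ℤ) := by
      rw [zpow_zero]; exact hcm
    have := zpow_inj_of_ne_one htf (hne i j hij) h0
    omega
  -- Step B: the exponent is the same for all generators
  have stepB : ∀ r : R, ∃ t : ℤ, ∀ i,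
      σ r ((a i : G ⧸ Subgroup.center G)) = ((a i : G ⧸ Subgroup.center G)) ^ t := by
    intro r
    obtain ⟨t0, ht0⟩ := stepA r i0
    refine ⟨t0, fun i => ?_⟩
    by_cases hi : i = i0
    · subst hi; exact ht0
    obtain ⟨ti, hti⟩ := stepA r i
    have hL := bilinL r (a i0) ((a i0) ^ t0) (a i)
      (by rw [QuotientGroup.mk_zpow]; exact ht0)
    have hRr := bilinR r (a i0) (a i) ((a i) ^ ti)
      (by rw [QuotientGroup.mk_zpow]; exact hti)
    have heq : grpComm ((a i0) ^ t0) (a i) = grpComm (a i0) ((a i) ^ ti) :=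
      Subtype.ext_iff.mp (hL.symm.trans hRr)
    rw [grpComm_zpow_left (hcent _ _), grpComm_zpow_right (hcent _ _)] at heq
    have hc0 : grpComm (a i0) (a i) ≠ 1 := hne i0 i (fun h => hi h.symm)
    have hti0 : t0 = ti := zpow_inj_of_ne_one htf hc0 heq
    rw [hti, ← hti0]
  choose t ht using stepB
  have huniq : ∀ (s u : ℤ),
      ((a i0 : G ⧸ Subgroup.center G)) ^ s = ((a i0 : G ⧸ Subgroup.center G)) ^ u → s = u :=
    hpowinj i0 i1 hne01
  -- ring hom properties of t
  have hone : t 1 = 1 := by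
    apply huniq
    rw [← ht 1 i0, σone, zpow_one]
  have hzero : t 0 = 0 := by
    apply huniq
    have h := σadd 0 0 ((a i0 : G ⧸ Subgroup.center G))
    rw [add_zero] at h
    have h1 : σ (0 : R) ((a i0 : G ⧸ Subgroup.center G)) = 1 := left_eq_mul.mp h
    rw [← ht 0 i0, h1, zpow_zero]
  have hadd : ∀ r s : R, t (r + s) = t r + t s := by
    intro r s
    apply huniq
    rw [← ht (r + s) i0, σadd, ht r i0, ht s i0, zpow_add]
  have hmul : ∀ r s : R, t (r * s) = t r * t s := by
    intro r s
    apply huniq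
    rw [← ht (r * s) i0, σsmul, ht s i0]
    have : σ r (((a i0 : G ⧸ Subgroup.center G)) ^ t s)
        = (σ r ((a i0 : G ⧸ Subgroup.center G))) ^ t s := map_zpow (F r) _ _
    rw [this, ht r i0, ← zpow_mul]
  -- injectivity of t
  have hinj : ∀ r s : R, t r = t s → r = s := by
    intro r s hts
    apply σfaith
    have hagree : Set.EqOn (F r) (F s)
        ((QuotientGroup.mk' (Subgroup.center G)) '' Set.range a) := by
      rintro _ ⟨_, ⟨i, rfl⟩, rfl⟩
      show σ r _ = σ s _
      rw [QuotientGroup.mk'_apply, ht r i, ht s i, hts]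
    have hclos := MonoidHom.eqOn_closure hagree
    have htop : Subgroup.closure
        ((QuotientGroup.mk' (Subgroup.center G)) '' Set.range a) = ⊤ := by
      rw [← MonoidHom.map_closure, hgen,
        Subgroup.map_top_of_surjective _ (QuotientGroup.mk'_surjective _)]
    intro x
    exact hclos (by rw [htop]; trivial)
  let φ : R →+* ℤ :=
    { toFun := t, map_one' := hone, map_mul' := hmul,
      map_zero' := hzero, map_add' := hadd }
  have hbij : Function.Bijective φ := by
    constructor
    · intro r s h
      exact hinj r s h
    · intro m
      refine ⟨(m : R), ?_⟩
      have := eq_intCast (φ.comp (Int.castRingHom R)) m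
      simpa using this
  exact ⟨RingEquiv.ofBijective φ hbij⟩
end

section
/- Let N = N_{2,m} be the free 2-step nilpotent group on a₁,...,aₘ and let R = {g₁,...,g_r} with r ≤ m, where gᵢ = aᵢ^{αᵢ} cᵢ in N with αᵢ ≠ 0 and cᵢ ∈ N'. Set G = N/⟨⟨R⟩⟩. If h = a_{r+1}^{γ_{r+1}} ··· aₘ^{γₘ} c with c ∈ N' satisfies h = 1 in G, then γ_{r+1} = ... = γₘ = 0 and c lies in the subgroup generated by {[aᵢ,aⱼ] : i ≤ r or j ≤ r}. -/
open Pointwise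


/-! ### A concrete free 2-step nilpotent group model -/

@[ext] structure HC (m : ℕ) where
  x : Fin m → ℤ
  s : Fin m → Fin m → ℤ

namespace HC
variable {m : ℕ}

instance : Mul (HC m) := ⟨fun g h => ⟨g.x + h.x, g.s + h.s + fun i j => g.x i * h.x j⟩⟩
instance : One (HC m) := ⟨⟨0, 0⟩⟩
instance : Inv (HC m) := ⟨fun g => ⟨-g.x, -g.s + fun i j => g.x i * g.x j⟩⟩

@[simp] lemma mul_x (g h : HC m) : (g * h).x = g.x + h.x := rfl
@[simp] lemma mul_s (g h : HC m) : (g * h).s = g.s + h.s + fun i j => g.x i * h.x j := rfl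
@[simp] lemma one_x : (1 : HC m).x = 0 := rfl
@[simp] lemma one_s : (1 : HC m).s = 0 := rfl
@[simp] lemma inv_x (g : HC m) : (g⁻¹).x = -g.x := rfl
@[simp] lemma inv_s (g : HC m) : (g⁻¹).s = -g.s + fun i j => g.x i * g.x j := rfl

instance : Group (HC m) where
  mul_assoc a b c := by ext i j <;> simp <;> ring
  one_mul a := by ext i j <;> simp
  mul_one a := by ext i j <;> simp
  inv_mul_cancel a := by ext i j <;> simp

lemma comm_eq (g h : HC m) :
    grpComm g h = ⟨0, fun i j => g.x i * h.x j - h.x i * g.x j⟩ := by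
  ext i j <;> simp [grpComm] <;> ring

lemma nil2 : ∀ g h k : HC m, grpComm g (grpComm h k) = 1 := by
  intro g h k
  rw [comm_eq h k, comm_eq g]
  ext i j <;> simp

/-- The first coordinate, as a group hom. -/
def fstM : HC m →* Multiplicative (Fin m → ℤ) where
  toFun g := Multiplicative.ofAdd g.x
  map_one' := by simp
  map_mul' g h := by simp [ofAdd_add]

lemma zpow_x (g : HC m) (n : ℤ) : (g ^ n).x = n • g.x := by
  have h := congrArg Multiplicative.toAdd (map_zpow (fstM (m := m)) g n)
  simpa [fstM, toAdd_zpow] using h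

end HC

/-! ### Identities in 2-step nilpotent groups -/

section Nil2
open scoped commutatorElement
variable {N : Type*} [Group N] (h2 : ∀ x y z : N, grpComm x (grpComm y z) = 1)
include h2

lemma comm_central (x y z : N) : z * grpComm x y = grpComm x y * z := by
  have h := h2 z x y
  set K := grpComm x y with hK
  rw [grpComm, mul_eq_one_iff_eq_inv] at h
  have h5 : z * (z⁻¹ * K⁻¹ * z) = z * K⁻¹ := congrArg (z * ·) h
  simp only [← mul_assoc, mul_inv_cancel, one_mul] at h5
  have h7 := congrArg (fun w => K * w * K) h5
  simpa [mul_assoc] using h7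

omit h2 in
lemma mul_k_right {k : N} (hk : ∀ w : N, w * k = k * w) (a b : N) :
    a * k * b = a * b * k := by rw [mul_assoc, ← hk b, ← mul_assoc]

lemma comm_eq_commutator (x y : N) : grpComm x y = ⁅x, y⁆ := by
  have hswap : x * y = y * x * grpComm x y := by rw [grpComm]; group
  have hk : ∀ w : N, w * grpComm x y = grpComm x y * w := fun w => comm_central h2 x y w
  symm; rw [commutatorElement_def]
  calc x * y * x⁻¹ * y⁻¹ = y * x * grpComm x y * x⁻¹ * y⁻¹ := by rw [← hswap]
    _ = y * x * x⁻¹ * grpComm x y * y⁻¹ := by rw [mul_k_right hk (y*x) x⁻¹]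
    _ = y * x * x⁻¹ * y⁻¹ * grpComm x y := by rw [mul_k_right hk (y*x*x⁻¹) y⁻¹]
    _ = grpComm x y := by group

lemma comm_mul_left (u v w : N) : grpComm (u * v) w = grpComm u w * grpComm v w := by
  rw [comm_eq_commutator h2, comm_eq_commutator h2, comm_eq_commutator h2]
  have h : ⁅u*v, w⁆ = (u * ⁅v,w⁆ * u⁻¹) * ⁅u,w⁆ := by group
  rw [h]
  have hK : ∀ z : N, z * ⁅v,w⁆ = ⁅v,w⁆ * z := by
    intro z; rw [← comm_eq_commutator h2]; exact comm_central h2 v w z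
  rw [mul_k_right hK u u⁻¹, mul_inv_cancel, one_mul]
  exact (hK ⁅u,w⁆).symm

lemma comm_mul_right (u v w : N) : grpComm u (v * w) = grpComm u v * grpComm u w := by
  rw [comm_eq_commutator h2, comm_eq_commutator h2, comm_eq_commutator h2]
  have h : ⁅u, v*w⁆ = ⁅u,v⁆ * (v * ⁅u,w⁆ * v⁻¹) := by group
  rw [h]
  have hK : ∀ z : N, z * ⁅u,w⁆ = ⁅u,w⁆ * z := by
    intro z; rw [← comm_eq_commutator h2]; exact comm_central h2 u w z
  rw [mul_k_right hK v v⁻¹, mul_inv_cancel, one_mul]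

lemma comm_symm (x y : N) : grpComm y x = (grpComm x y)⁻¹ := by
  rw [comm_eq_commutator h2, comm_eq_commutator h2, commutatorElement_inv]

omit h2 in
@[simp] lemma comm_one_right (x : N) : grpComm x 1 = 1 := by simp [grpComm]
omit h2 in
@[simp] lemma comm_one_left (y : N) : grpComm 1 y = 1 := by simp [grpComm]

lemma comm_inv_left (x y : N) : grpComm x⁻¹ y = (grpComm x y)⁻¹ := by
  have h := comm_mul_left h2 x x⁻¹ y
  simp only [mul_inv_cancel, comm_one_left] at h
  exact inv_eq_of_mul_eq_one_right h.symm |>.symm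

lemma comm_inv_right (x y : N) : grpComm x y⁻¹ = (grpComm x y)⁻¹ := by
  have h := comm_mul_right h2 x y y⁻¹
  simp only [mul_inv_cancel, comm_one_right] at h
  exact inv_eq_of_mul_eq_one_right h.symm |>.symm

end Nil2

/-- Let `N` be the free 2-step nilpotent group on `a₁, …, aₘ` (characterized by
its universal property), `R = {aᵢ^{αᵢ}cᵢ : i ≤ r}` with `αᵢ ≠ 0`, `cᵢ ∈ N'`,
`r ≤ m`, and `G = N/⟨⟨R⟩⟩`. If `h = a_{r+1}^{γ_{r+1}} ⋯ aₘ^{γₘ} c` with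
`c ∈ N'` is trivial in `G` (i.e. `h` lies in the normal closure of `R`), then
all `γᵢ = 0` and `c` lies in the subgroup generated by the commutators
`[aᵢ,aⱼ]` with `i ≤ r` or `j ≤ r`. -/
theorem stmt_16 (m r : ℕ) (hr : r ≤ m) (N : Type) [Group N] (a : Fin m → N)
    (h2 : ∀ x y z : N, grpComm x (grpComm y z) = 1)
    (hgen : Subgroup.closure (Set.range a) = ⊤)
    (hfree : ∀ (H : Type) (_ : Group H),
      (∀ x y z : H, grpComm x (grpComm y z) = 1) →
      ∀ b : Fin m → H, ∃ φ : N →* H, ∀ i, φ (a i) = b i)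
    (α : Fin r → ℤ) (hα : ∀ i, α i ≠ 0)
    (cR : Fin r → N) (hcR : ∀ i, cR i ∈ commutator N)
    (γ : Fin m → ℤ) (hγ : ∀ i : Fin m, (i : ℕ) < r → γ i = 0)
    (c : N) (hc : c ∈ commutator N)
    (hh : ((List.finRange m).map fun i => a i ^ γ i).prod * c ∈
      Subgroup.normalClosure
        (Set.range fun i : Fin r => a (Fin.castLE hr i) ^ α i * cR i)) :
    (∀ i, γ i = 0) ∧
      c ∈ Subgroup.closure
        {x : N | ∃ i j : Fin m, ((i : ℕ) < r ∨ (j : ℕ) < r) ∧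
          x = grpComm (a i) (a j)} := by
  classical
  obtain ⟨φ, hφ⟩ := hfree (HC m) inferInstance HC.nil2 (fun i => ⟨Pi.single i 1, 0⟩)
  have hmapcomm : ∀ x y : N, φ (grpComm x y) = grpComm (φ x) (φ y) := by
    intro x y; simp [grpComm, map_mul, map_inv]
  -- `φ` kills the first coordinate of commutators
  have hcfst : ∀ w : N, w ∈ commutator N → (φ w).x = 0 := by
    intro w hw
    have h := Abelianization.commutator_subset_ker ((HC.fstM).comp φ) hw
    rw [MonoidHom.mem_ker] at h
    simpa [HC.fstM, ofAdd_eq_one] using h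
  ----------------------------------------------------------------
  -- Part 1 : all γ are zero
  ----------------------------------------------------------------
  have hab : ∀ x y z : Multiplicative ℤ, grpComm x (grpComm y z) = 1 := by
    intro x y z; simp [grpComm, mul_comm, mul_left_comm]
  have hγ0 : ∀ i : Fin m, γ i = 0 := by
    intro k
    by_cases hk : (k : ℕ) < r
    · exact hγ k hk
    push_neg at hk
    obtain ⟨ψ, hψ⟩ := hfree (Multiplicative ℤ) inferInstance hab
      (fun i => Multiplicative.ofAdd (if i = k then (1:ℤ) else 0))
    have hker : Subgroup.normalClosure
        (Set.range fun i : Fin r => a (Fin.castLE hr i) ^ α i * cR i) ≤ ψ.ker := by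
      apply Subgroup.normalClosure_le_normal
      rintro x ⟨i, rfl⟩
      have h1 : ψ (cR i) = 1 :=
        MonoidHom.mem_ker.1 (Abelianization.commutator_subset_ker ψ (hcR i))
      have h2' : ψ (a (Fin.castLE hr i)) = 1 := by
        rw [hψ, if_neg, ofAdd_zero]
        intro he
        have hv : ((Fin.castLE hr i : Fin m) : ℕ) = (k : ℕ) := by rw [he]
        have : (i : ℕ) < r := i.isLt
        simp only [Fin.coe_castLE] at hv
        omega
      simp [SetLike.mem_coe, MonoidHom.mem_ker, map_mul, map_zpow, h1, h2']
    have hψh := MonoidHom.mem_ker.1 (hker hh)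
    have hcone : ψ c = 1 :=
      MonoidHom.mem_ker.1 (Abelianization.commutator_subset_ker ψ hc)
    rw [map_mul, hcone, mul_one] at hψh
    have hprod : ψ (((List.finRange m).map fun i => a i ^ γ i).prod)
        = Multiplicative.ofAdd (γ k) := by
      rw [map_list_prod, List.map_map, ← Fin.prod_univ_def]
      refine Multiplicative.toAdd.injective ?_
      rw [toAdd_prod]
      simp only [Function.comp_apply, map_zpow, hψ, toAdd_zpow, toAdd_ofAdd,
        smul_eq_mul, mul_ite, mul_one, mul_zero]
      simp [Finset.sum_ite_eq']
    rw [hprod] at hψh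
    exact ofAdd_eq_one.1 hψh
  -- the word part of h is trivial
  have hlp : ((List.finRange m).map fun i => a i ^ γ i).prod = 1 := by
    apply List.prod_eq_one
    intro x hx
    simp only [List.mem_map] at hx
    obtain ⟨i, -, rfl⟩ := hx
    rw [hγ0 i, zpow_zero]
  rw [hlp, one_mul] at hh
  ----------------------------------------------------------------
  -- the subgroup U : first coord supported below r, pure entries of s vanish
  ----------------------------------------------------------------
  let U : Subgroup (HC m) :=
    { carrier := {g | (∀ k : Fin m, r ≤ (k:ℕ) → g.x k = 0) ∧
        ∀ p q : Fin m, r ≤ (p:ℕ) → r ≤ (q:ℕ) → g.s p q = 0}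
      one_mem' := ⟨fun k _ => rfl, fun p q _ _ => rfl⟩
      mul_mem' := @fun g h hg hh => by
        obtain ⟨hg1, hg2⟩ := hg; obtain ⟨hh1, hh2⟩ := hh
        refine ⟨fun k hk => ?_, fun p q hp hq => ?_⟩
        · simp [hg1 k hk, hh1 k hk]
        · simp [hg2 p q hp hq, hh2 p q hp hq, hg1 p hp]
      inv_mem' := @fun g hg => by
        obtain ⟨hg1, hg2⟩ := hg
        refine ⟨fun k hk => ?_, fun p q hp hq => ?_⟩
        · simp [hg1 k hk]
        · simp [hg2 p q hp hq, hg1 p hp] }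
  ----------------------------------------------------------------
  -- the normal subgroup W capturing the structure of the normal closure
  ----------------------------------------------------------------
  let t : Fin r → Fin m → Fin m → ℤ := fun i => (φ (cR i)).s
  let W : Subgroup (HC m) :=
    { carrier := {g | (∀ k : Fin m, r ≤ (k:ℕ) → g.x k = 0) ∧
        ∃ n : Fin r → ℤ, (∀ i : Fin r, g.x (Fin.castLE hr i) = n i * α i) ∧
          ∀ p q : Fin m, r ≤ (p:ℕ) → r ≤ (q:ℕ) → g.s p q = ∑ i, n i * t i p q }
      one_mem' := ⟨fun k _ => rfl, 0, fun i => by simp, fun p q _ _ => by simp⟩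
      mul_mem' := @fun g h hg hh => by
        obtain ⟨hg1, ng, hg2, hg3⟩ := hg; obtain ⟨hh1, nh, hh2, hh3⟩ := hh
        refine ⟨fun k hk => by simp [hg1 k hk, hh1 k hk], ng + nh, fun i => ?_,
          fun p q hp hq => ?_⟩
        · simp only [HC.mul_x, Pi.add_apply, hg2 i, hh2 i]; ring
        · simp only [HC.mul_s, HC.mul_x, Pi.add_apply, hg3 p q hp hq,
            hh3 p q hp hq, hg1 p hp, zero_mul, add_zero]
          rw [← Finset.sum_add_distrib]
          congr 1; funext i; ring
      inv_mem' := @fun g hg => by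
        obtain ⟨hg1, ng, hg2, hg3⟩ := hg
        refine ⟨fun k hk => by simp [hg1 k hk], -ng, fun i => ?_, fun p q hp hq => ?_⟩
        · simp only [HC.inv_x, Pi.neg_apply, hg2 i]; ring
        · simp only [HC.inv_s, Pi.add_apply, Pi.neg_apply, hg3 p q hp hq, hg1 p hp,
            mul_zero, zero_mul, add_zero]
          rw [← Finset.sum_neg_distrib]
          congr 1; funext i; ring }
  haveI hWn : W.Normal := by
    constructor
    intro g hg y
    obtain ⟨hg1, ng, hg2, hg3⟩ := hg
    refine ⟨fun k hk => ?_, ng, fun i => ?_, fun p q hp hq => ?_⟩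
    · simp [hg1 k hk]
    · simp [hg2 i]
    · have e1 := hg1 p hp; have e2 := hg1 q hq
      simp only [HC.mul_s, HC.mul_x, HC.inv_s, HC.inv_x, Pi.add_apply, Pi.neg_apply,
        e1, e2, hg3 p q hp hq, mul_zero, zero_mul, add_zero, zero_add]
      ring
  -- the images of the relators lie in W
  have hrel : ∀ i : Fin r, φ (a (Fin.castLE hr i) ^ α i * cR i) ∈ W := by
    intro i
    have hi'lt : ((Fin.castLE hr i : Fin m) : ℕ) < r := by
      simpa using i.isLt
    have hUa : φ (a (Fin.castLE hr i)) ^ α i ∈ U := by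
      refine U.zpow_mem ⟨?_, ?_⟩ (α i)
      · intro k hk
        rw [hφ]
        exact Pi.single_eq_of_ne (by apply Fin.ne_of_val_ne; omega) 1
      · intro p q hp hq; rw [hφ]; rfl
    have hfstc : (φ (cR i)).x = 0 := hcfst (cR i) (hcR i)
    refine ⟨fun k hk => ?_, Pi.single i 1, fun j => ?_, fun p q hp hq => ?_⟩
    · rw [map_mul, map_zpow, HC.mul_x, Pi.add_apply, hfstc, Pi.zero_apply, add_zero,
        HC.zpow_x, hφ]
      dsimp only
      rw [Pi.smul_apply, smul_eq_mul, Pi.single_apply,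
        if_neg (show ¬ k = Fin.castLE hr i by rw [Fin.ext_iff]; simp; omega), mul_zero]
    · rw [map_mul, map_zpow, HC.mul_x, Pi.add_apply, hfstc, Pi.zero_apply, add_zero,
        HC.zpow_x, hφ]
      dsimp only
      rw [Pi.smul_apply, smul_eq_mul, Pi.single_apply, Pi.single_apply]
      by_cases hij : j = i
      · subst hij; rw [if_pos rfl, if_pos rfl]; ring
      · rw [if_neg (fun he => hij (Fin.castLE_injective hr he)), if_neg hij]; ring
    · rw [map_mul, map_zpow]
      simp only [HC.mul_s, Pi.add_apply]
      rw [hUa.2 p q hp hq, hUa.1 p hp, zero_add, zero_mul, add_zero]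
      rw [Finset.sum_eq_single i (fun b _ hb => by
        rw [Pi.single_eq_of_ne hb 1, zero_mul]) (by simp)]
      rw [Pi.single_eq_same, one_mul]
  -- hence φ c ∈ W
  haveI : (W.comap φ).Normal := hWn.comap φ
  have hφc : φ c ∈ W := by
    have hle : Subgroup.normalClosure
        (Set.range fun i : Fin r => a (Fin.castLE hr i) ^ α i * cR i) ≤ W.comap φ := by
      apply Subgroup.normalClosure_le_normal
      rintro x ⟨i, rfl⟩
      exact hrel i
    exact hle hh
  obtain ⟨hW1, n0, hW2, hW3⟩ := hφc
  have hn0 : ∀ i, n0 i = 0 := by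
    intro i
    have h := hW2 i
    rw [hcfst c hc, Pi.zero_apply] at h
    rcases mul_eq_zero.1 h.symm with h' | h'
    · exact h'
    · exact absurd h' (hα i)
  have hPure : ∀ p q : Fin m, r ≤ (p:ℕ) → r ≤ (q:ℕ) → (φ c).s p q = 0 := by
    intro p q hp hq
    rw [hW3 p q hp hq]
    simp [hn0]
  ----------------------------------------------------------------
  -- decomposition of c into mixed and pure commutators
  ----------------------------------------------------------------
  set Kmix : Set N := {x : N | ∃ i j : Fin m, ((i : ℕ) < r ∨ (j : ℕ) < r) ∧
      x = grpComm (a i) (a j)} with hKmixdef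
  set Kpure : Set N := {x : N | ∃ i j : Fin m, r ≤ (i : ℕ) ∧ r ≤ (j : ℕ) ∧
      x = grpComm (a i) (a j)} with hKpuredef
  have memT : ∀ x : N, x ∈ Subgroup.closure (Set.range a) := fun x => by
    rw [hgen]; trivial
  have key : ∀ x y : N, grpComm x y ∈ Subgroup.closure (Kmix ∪ Kpure) := by
    have main : ∀ x : N, x ∈ Subgroup.closure (Set.range a) →
        ∀ y : N, grpComm x y ∈ Subgroup.closure (Kmix ∪ Kpure) := by
      intro x hx
      induction hx using Subgroup.closure_induction with
      | mem x hx =>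
        obtain ⟨i, rfl⟩ := hx
        intro y
        have hy := memT y
        induction hy using Subgroup.closure_induction with
        | mem y hy =>
          obtain ⟨j, rfl⟩ := hy
          rcases lt_or_ge (i : ℕ) r with hi | hi
          · exact Subgroup.subset_closure (Or.inl ⟨i, j, Or.inl hi, rfl⟩)
          · rcases lt_or_ge (j : ℕ) r with hj | hj
            · exact Subgroup.subset_closure (Or.inl ⟨i, j, Or.inr hj, rfl⟩)
            · exact Subgroup.subset_closure (Or.inr ⟨i, j, hi, hj, rfl⟩)
        | one => rw [comm_one_right]; exact Subgroup.one_mem _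
        | mul u v hu hv ihu ihv =>
          rw [comm_mul_right h2]; exact Subgroup.mul_mem _ ihu ihv
        | inv u hu ihu => rw [comm_inv_right h2]; exact Subgroup.inv_mem _ ihu
      | one => intro y; rw [comm_one_left]; exact Subgroup.one_mem _
      | mul u v hu hv ihu ihv =>
        intro y; rw [comm_mul_left h2]; exact Subgroup.mul_mem _ (ihu y) (ihv y)
      | inv u hu ihu => intro y; rw [comm_inv_left h2]; exact Subgroup.inv_mem _ (ihu y)
    exact fun x y => main x (memT x) y
  have hcS : c ∈ Subgroup.closure (Kmix ∪ Kpure) := by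
    have h1 : commutator N ≤ Subgroup.closure (Kmix ∪ Kpure) := by
      rw [commutator_eq_closure]
      refine (Subgroup.closure_le _).2 ?_
      rintro w ⟨g1, g2, rfl⟩
      rw [← comm_eq_commutator h2]
      exact key g1 g2
    exact h1 hc
  have hle : ∀ (K : Set N), (∀ w ∈ K, ∃ u v : N, w = grpComm u v) →
      Subgroup.closure K ≤ Subgroup.center N := by
    intro K hK
    refine (Subgroup.closure_le _).2 ?_
    intro w hw
    obtain ⟨u, v, rfl⟩ := hK w hw
    exact Subgroup.mem_center_iff.2 (fun g => comm_central h2 u v g)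
  have hmixle : Subgroup.closure Kmix ≤ Subgroup.center N :=
    hle Kmix (by rintro w ⟨i, j, -, rfl⟩; exact ⟨_, _, rfl⟩)
  have hpurele : Subgroup.closure Kpure ≤ Subgroup.center N :=
    hle Kpure (by rintro w ⟨i, j, -, -, rfl⟩; exact ⟨_, _, rfl⟩)
  haveI hnormpure : (Subgroup.closure Kpure).Normal := by
    constructor
    intro w hw g
    have hz := Subgroup.mem_center_iff.1 (hpurele hw) g
    have : g * w * g⁻¹ = w := by rw [hz, mul_assoc, mul_inv_cancel, mul_one]
    rwa [this]
  rw [Subgroup.closure_union] at hcS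
  have hcmul : c ∈ (Subgroup.closure Kmix : Set N) * (Subgroup.closure Kpure : Set N) := by
    rw [← Subgroup.mul_normal]
    exact hcS
  obtain ⟨d, hd, e, he, hde⟩ := hcmul
  ----------------------------------------------------------------
  -- the mixed part maps into "pure-zero" elements of HC
  ----------------------------------------------------------------
  let Z : Subgroup (HC m) :=
    { carrier := {g | g.x = 0 ∧ ∀ p q : Fin m, r ≤ (p:ℕ) → r ≤ (q:ℕ) → g.s p q = 0}
      one_mem' := ⟨rfl, fun p q _ _ => rfl⟩
      mul_mem' := @fun g h hg hh => by
        obtain ⟨hg1, hg2⟩ := hg; obtain ⟨hh1, hh2⟩ := hh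
        refine ⟨by rw [HC.mul_x, hg1, hh1, add_zero], fun p q hp hq => ?_⟩
        simp [hg2 p q hp hq, hh2 p q hp hq, hg1]
      inv_mem' := @fun g hg => by
        obtain ⟨hg1, hg2⟩ := hg
        refine ⟨by rw [HC.inv_x, hg1, neg_zero], fun p q hp hq => ?_⟩
        simp [hg2 p q hp hq, hg1] }
  have hdZ : φ d ∈ Z := by
    have hsub : Subgroup.closure Kmix ≤ Z.comap φ := by
      refine (Subgroup.closure_le _).2 ?_
      rintro w ⟨i, j, hij, rfl⟩
      show φ _ ∈ Z
      rw [hmapcomm, hφ, hφ, HC.comm_eq]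
      refine ⟨rfl, fun p q hp hq => ?_⟩
      dsimp only
      rcases hij with hi | hj
      · rw [Pi.single_eq_of_ne (Fin.ne_of_val_ne (show ((p:Fin m):ℕ) ≠ ((i:Fin m):ℕ) by omega)) 1,
          Pi.single_eq_of_ne (Fin.ne_of_val_ne (show ((q:Fin m):ℕ) ≠ ((i:Fin m):ℕ) by omega)) 1]
        ring
      · rw [Pi.single_eq_of_ne (Fin.ne_of_val_ne (show ((q:Fin m):ℕ) ≠ ((j:Fin m):ℕ) by omega)) 1,
          Pi.single_eq_of_ne (Fin.ne_of_val_ne (show ((p:Fin m):ℕ) ≠ ((j:Fin m):ℕ) by omega)) 1]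
        ring
    exact hsub hd
  ----------------------------------------------------------------
  -- the pure part : a central commutative subgroup
  ----------------------------------------------------------------
  let CD : Subgroup N :=
    { carrier := {w | (∀ z : N, z * w = w * z) ∧ (φ w).x = 0}
      one_mem' := ⟨fun z => by simp, by simp⟩
      mul_mem' := @fun u v hu hv => by
        obtain ⟨hu1, hu2⟩ := hu; obtain ⟨hv1, hv2⟩ := hv
        refine ⟨fun z => ?_, by rw [map_mul, HC.mul_x, hu2, hv2, add_zero]⟩
        rw [← mul_assoc, hu1 z, mul_assoc, hv1 z, mul_assoc]
      inv_mem' := @fun u hu => by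
        obtain ⟨hu1, hu2⟩ := hu
        refine ⟨fun z => ?_, by rw [map_inv, HC.inv_x, hu2, neg_zero]⟩
        exact (Commute.inv_right (hu1 z : Commute z u)).eq }
  have hCD : ∀ w : N, w ∈ CD → (∀ z : N, z * w = w * z) ∧ (φ w).x = 0 := fun w hw => hw
  letI : CommGroup CD :=
    { (inferInstance : Group CD) with
      mul_comm := fun u v => Subtype.ext ((hCD u.1 u.2).1 v.1).symm }
  set uu : Fin m × Fin m → CD := fun p =>
    if hp : r ≤ (p.1 : ℕ) ∧ (p.1 : ℕ) < (p.2 : ℕ) then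
      ⟨grpComm (a p.1) (a p.2), fun z => comm_central h2 _ _ z, by
        rw [hmapcomm, HC.comm_eq]⟩
    else 1 with huudef
  have huu_val : ∀ p : Fin m × Fin m, ∀ hp : r ≤ (p.1 : ℕ) ∧ (p.1 : ℕ) < (p.2 : ℕ),
      ((uu p : CD) : N) = grpComm (a p.1) (a p.2) := by
    intro p hp
    rw [huudef]
    simp only []
    rw [dif_pos hp]
  have huu_one : ∀ p : Fin m × Fin m, ¬(r ≤ (p.1 : ℕ) ∧ (p.1 : ℕ) < (p.2 : ℕ)) →
      uu p = 1 := by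
    intro p hp
    rw [huudef]
    simp only []
    rw [dif_neg hp]
  set χ : (Fin m × Fin m → ℤ) → CD := fun n => ∏ p, uu p ^ n p with hχdef
  have hχapp : ∀ n, χ n = ∏ p, uu p ^ n p := fun n => by rw [hχdef]
  have hχadd : ∀ n n', χ (n + n') = χ n * χ n' := by
    intro n n'
    rw [hχapp, hχapp, hχapp, ← Finset.prod_mul_distrib]
    exact Finset.prod_congr rfl fun p _ => by rw [Pi.add_apply, zpow_add]
  have hχ0 : χ 0 = 1 := by
    rw [hχapp]
    simp
  have hχneg : ∀ n, χ (-n) = (χ n)⁻¹ := by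
    intro n
    refine eq_inv_of_mul_eq_one_left ?_
    rw [← hχadd]
    simp [hχ0]
  let Sχ : Subgroup N :=
    { carrier := {w | ∃ n, w = ((χ n : CD) : N)}
      one_mem' := ⟨0, by rw [hχ0]; simp⟩
      mul_mem' := @fun u v hu hv => by
        obtain ⟨n, hn⟩ := hu; obtain ⟨n', hn'⟩ := hv
        exact ⟨n + n', by rw [hn, hn', hχadd]; simp⟩
      inv_mem' := @fun u hu => by
        obtain ⟨n, hn⟩ := hu
        exact ⟨-n, by rw [hn, hχneg]; simp⟩ }
  have hpureSχ : Subgroup.closure Kpure ≤ Sχ := by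
    refine (Subgroup.closure_le _).2 ?_
    rintro w ⟨i, j, hi, hj, rfl⟩
    rcases lt_trichotomy (i : ℕ) (j : ℕ) with hlt | heq | hgt
    · refine ⟨Pi.single (i, j) 1, ?_⟩
      have hone : χ (Pi.single (i, j) 1) = uu (i, j) := by
        rw [hχapp]
        rw [Finset.prod_eq_single (i, j) (fun b _ hb => by
          rw [Pi.single_eq_of_ne hb 1, zpow_zero]) (by simp)]
        rw [Pi.single_eq_same, zpow_one]
      rw [hone, huu_val (i, j) ⟨hi, hlt⟩]
    · have hij : i = j := Fin.ext heq
      subst hij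
      refine ⟨0, ?_⟩
      rw [hχ0]
      rw [show grpComm (a i) (a i) = 1 by simp [grpComm]]
      simp
    · refine ⟨-Pi.single (j, i) 1, ?_⟩
      have hone : χ (Pi.single (j, i) 1) = uu (j, i) := by
        rw [hχapp]
        rw [Finset.prod_eq_single (j, i) (fun b _ hb => by
          rw [Pi.single_eq_of_ne hb 1, zpow_zero]) (by simp)]
        rw [Pi.single_eq_same, zpow_one]
      rw [hχneg, hone, comm_symm h2 (a j) (a i)]
      rw [show ((((uu (j, i))⁻¹ : CD)) : N) = (((uu (j, i) : CD) : N))⁻¹ by simp]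
      rw [huu_val (j, i) ⟨hj, hgt⟩]
  obtain ⟨nE, hnE⟩ := hpureSχ he
  -- φ e has vanishing pure entries
  have heform : e = d⁻¹ * c := by rw [← hde]; group
  have hdinv : φ d⁻¹ ∈ Z := by rw [map_inv]; exact Z.inv_mem hdZ
  have hφes : ∀ p q : Fin m, r ≤ (p:ℕ) → r ≤ (q:ℕ) → (φ e).s p q = 0 := by
    intro p q hp hq
    rw [heform, map_mul]
    simp only [HC.mul_s, Pi.add_apply]
    rw [hdinv.2 p q hp hq, hPure p q hp hq, hdinv.1]
    simp
  -- hence all exponents at ordered pure pairs vanish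
  have hnE0 : ∀ q : Fin m × Fin m, r ≤ (q.1 : ℕ) → (q.1 : ℕ) < (q.2 : ℕ) → nE q = 0 := by
    intro q hq1 hq2
    have hq2r : r ≤ (q.2 : ℕ) := by omega
    let ρ : CD →* Multiplicative ℤ :=
      { toFun := fun w => Multiplicative.ofAdd ((φ (w : N)).s q.1 q.2)
        map_one' := by
          show Multiplicative.ofAdd ((φ ((1 : CD) : N)).s q.1 q.2) = 1
          rw [OneMemClass.coe_one, map_one]
          simp
        map_mul' := fun u v => by
          show Multiplicative.ofAdd ((φ ((u * v : CD) : N)).s q.1 q.2) = _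
          rw [← ofAdd_add]
          apply congrArg
          have : ((u * v : CD) : N) = (u : N) * (v : N) := rfl
          rw [this, map_mul, HC.mul_s, Pi.add_apply, Pi.add_apply,
            (hCD u.1 u.2).2]
          simp }
    have hρval : ∀ w : CD, ρ w = Multiplicative.ofAdd ((φ (w : N)).s q.1 q.2) :=
      fun w => rfl
    have hρe : ρ (χ nE) = Multiplicative.ofAdd ((φ e).s q.1 q.2) := by
      rw [hnE]; exact hρval _
    have hρχ : ρ (χ nE) = Multiplicative.ofAdd (nE q) := by
      rw [hχapp, map_prod]
      have hps : ∀ p ∈ (Finset.univ : Finset (Fin m × Fin m)), p ≠ q →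
          ρ (uu p ^ nE p) = 1 := by
        intro p _ hpq
        by_cases hp : r ≤ (p.1 : ℕ) ∧ (p.1 : ℕ) < (p.2 : ℕ)
        · have hzero : ρ (uu p) = 1 := by
            rw [hρval, huu_val p hp, hmapcomm, hφ, hφ, HC.comm_eq, ofAdd_eq_one]
            have hne : (p.1 : ℕ) ≠ (q.1 : ℕ) ∨ (p.2 : ℕ) ≠ (q.2 : ℕ) := by
              by_contra hcon
              push_neg at hcon
              exact hpq (Prod.ext (Fin.ext hcon.1) (Fin.ext hcon.2))
            dsimp only
            have hterm2 : (Pi.single p.2 (1:ℤ) : Fin m → ℤ) q.1 * (Pi.single p.1 (1:ℤ) : Fin m → ℤ) q.2 = 0 := by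
              by_cases ee : (q.1 : ℕ) = (p.2 : ℕ)
              · rw [Pi.single_eq_of_ne
                  (Fin.ne_of_val_ne (show (q.2:ℕ) ≠ (p.1:ℕ) by omega)) 1, mul_zero]
              · rw [Pi.single_eq_of_ne (Fin.ne_of_val_ne ee) 1, zero_mul]
            have hterm1 : (Pi.single p.1 (1:ℤ) : Fin m → ℤ) q.1 * (Pi.single p.2 (1:ℤ) : Fin m → ℤ) q.2 = 0 := by
              rcases hne with hne | hne
              · rw [Pi.single_eq_of_ne
                  (Fin.ne_of_val_ne (show (q.1:ℕ) ≠ (p.1:ℕ) by omega)) 1, zero_mul]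
              · rw [Pi.single_eq_of_ne
                  (Fin.ne_of_val_ne (show (q.2:ℕ) ≠ (p.2:ℕ) by omega)) 1, mul_zero]
            rw [hterm1, hterm2]; ring
          rw [map_zpow, hzero, one_zpow]
        · rw [huu_one p hp, one_zpow, map_one]
      rw [Finset.prod_eq_single q hps (by simp)]
      rw [map_zpow]
      have hqv : ρ (uu q) = Multiplicative.ofAdd (1:ℤ) := by
        rw [hρval, huu_val q ⟨hq1, hq2⟩, hmapcomm, hφ, hφ, HC.comm_eq]
        apply congrArg
        dsimp only
        rw [Pi.single_eq_same, Pi.single_eq_same,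
          Pi.single_eq_of_ne (Fin.ne_of_val_ne (show ((q.1:Fin m):ℕ) ≠ ((q.2:Fin m):ℕ) by omega)) 1]
        ring
      rw [hqv]
      refine Multiplicative.toAdd.injective ?_
      rw [toAdd_zpow]
      simp
    rw [hρχ, hφes q.1 q.2 hq1 hq2r] at hρe
    exact Multiplicative.ofAdd.injective hρe
  -- so e = 1 and c = d lies in the mixed closure
  have he1 : e = 1 := by
    rw [hnE]
    have hone : χ nE = 1 := by
      rw [hχapp]
      apply Finset.prod_eq_one
      intro p _
      by_cases hp : r ≤ (p.1 : ℕ) ∧ (p.1 : ℕ) < (p.2 : ℕ)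
      · rw [hnE0 p hp.1 hp.2, zpow_zero]
      · rw [huu_one p hp, one_zpow]
    rw [hone]; simp
  refine ⟨hγ0, ?_⟩
  have hcd : c = d := by rw [← hde, he1]; simp
  rw [hcd]
  exact hd
end
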